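/- Extended partial fraction lemma: Let r ≥ 1 and let t, u, y₁, …, y_r, z₁, …, z_r be complex numbers with z₁, …, z_r nonzero and pairwise distinct, u ≠ 1, and t z_l ≠ 1 for all l, and set Y := y₁ y₂ ⋯ y_r. Then [(1 − uY)/(1 − u)] · ∏_{i=1}^r (1 − t z_i y_i)/(1 − t z_i) = Y + ∑_{l=1}^r [(1 − uY t z_l) ∏_{i=1}^r (1 − y_i z_i/z_l)] / [(1 − u)(1 − t z_l) ∏_{i≠l} (1 − z_i/z_l)]. -/

import Mathlib

open scoped BigOperators

open Polynomial

lemma my_natDegree_le {ι : Type*} (s : Finset ι) (f g : ι → ℂ) :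
    (∏ i ∈ s, (C (f i) + C (g i) * X)).natDegree ≤ s.card := by
  refine le_trans (Polynomial.natDegree_prod_le _ _) ?_
  have h : ∀ i ∈ s, (C (f i) + C (g i) * X).natDegree ≤ 1 := fun i _ => by
    have := Polynomial.natDegree_linear_le (a := g i) (b := f i)
    rwa [add_comm] at this
  calc ∑ i ∈ s, (C (f i) + C (g i) * X).natDegree ≤ ∑ _i ∈ s, 1 :=
        Finset.sum_le_sum (f := fun i => (C (f i) + C (g i) * X).natDegree) (g := fun _ => 1) h
    _ = s.card := by simp

lemma my_coeff_card {ι : Type*} (s : Finset ι) (f g : ι → ℂ) :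
    (∏ i ∈ s, (C (f i) + C (g i) * X)).coeff s.card = ∏ i ∈ s, g i := by
  induction s using Finset.cons_induction with
  | empty => simp
  | cons a s ha ih =>
    rw [Finset.prod_cons, Finset.card_cons, Finset.prod_cons, add_mul, coeff_add]
    have h1 : (∏ i ∈ s, (C (f i) + C (g i) * X)).coeff (s.card + 1) = 0 :=
      coeff_eq_zero_of_natDegree_lt (lt_of_le_of_lt (my_natDegree_le s f g) (Nat.lt_succ_self _))
    rw [coeff_C_mul, h1, mul_zero, zero_add, mul_assoc, coeff_C_mul, coeff_X_mul, ih]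

lemma lemA (r : ℕ) (t : ℂ) (y z : Fin r → ℂ) (hz : ∀ i, z i ≠ 0)
    (hzinj : Function.Injective z) :
    ∏ i, (1 - t * z i * y i) =
      (∏ i, y i) * ∏ i, (1 - t * z i) +
        ∑ l, ((∏ i, (1 - y i * z i / z l)) / (∏ i ∈ Finset.univ.erase l, (1 - z i / z l))) *
          ∏ i ∈ Finset.univ.erase l, (1 - t * z i) := by
  rcases Nat.eq_zero_or_pos r with hr0 | hrpos
  · subst hr0; simp
  have hQ : ∀ l, (∏ i ∈ Finset.univ.erase l, (1 - z i / z l)) ≠ 0 := by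
    intro l
    refine Finset.prod_ne_zero_iff.mpr fun i hi => ?_
    have hil : i ≠ l := Finset.ne_of_mem_erase hi
    rw [sub_ne_zero]
    intro h
    apply hil; apply hzinj
    field_simp [hz l] at h
    exact h.symm
  set F : Polynomial ℂ :=
    (∏ i, (C 1 + C (-(z i * y i)) * X)) - C (∏ i, y i) * (∏ i, (C 1 + C (-(z i)) * X))
      - ∑ l, C ((∏ i, (1 - y i * z i / z l)) / (∏ i ∈ Finset.univ.erase l, (1 - z i / z l))) *
          ∏ i ∈ Finset.univ.erase l, (C 1 + C (-(z i)) * X) with hF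
  have hroot : ∀ l : Fin r, F.eval (z l)⁻¹ = 0 := by
    intro l
    have hzl := hz l
    rw [hF]
    simp only [Polynomial.eval_sub, Polynomial.eval_mul, Polynomial.eval_prod,
      Polynomial.eval_finset_sum, Polynomial.eval_add, Polynomial.eval_C, Polynomial.eval_X,
      Polynomial.eval_one]
    have e1 : ∏ i, ((1:ℂ) + -(z i * y i) * (z l)⁻¹) = ∏ i, (1 - y i * z i / z l) :=
      Finset.prod_congr rfl fun i _ => by rw [div_eq_mul_inv]; ring
    have e2 : ∏ i, ((1:ℂ) + -(z i) * (z l)⁻¹) = 0 :=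
      Finset.prod_eq_zero (Finset.mem_univ l) (by rw [neg_mul, mul_inv_cancel₀ hzl]; ring)
    have e3 : (∑ m, ((∏ i, (1 - y i * z i / z m)) / (∏ i ∈ Finset.univ.erase m, (1 - z i / z m)))
        * ∏ i ∈ Finset.univ.erase m, ((1:ℂ) + -(z i) * (z l)⁻¹))
        = ∏ i, (1 - y i * z i / z l) := by
      rw [Finset.sum_eq_single l]
      · have e4 : ∏ i ∈ Finset.univ.erase l, ((1:ℂ) + -(z i) * (z l)⁻¹)
            = ∏ i ∈ Finset.univ.erase l, (1 - z i / z l) :=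
          Finset.prod_congr rfl fun i _ => by rw [div_eq_mul_inv]; ring
        rw [e4]
        exact div_mul_cancel₀ _ (hQ l)
      · intro m _ hml
        have h0 : ∏ i ∈ Finset.univ.erase m, ((1:ℂ) + -(z i) * (z l)⁻¹) = 0 :=
          Finset.prod_eq_zero (Finset.mem_erase.mpr ⟨Ne.symm hml, Finset.mem_univ l⟩)
            (by rw [neg_mul, mul_inv_cancel₀ hzl]; ring)
        rw [h0, mul_zero]
      · intro h; exact absurd (Finset.mem_univ l) h
    rw [e1, e2, e3]; ring
  have hFdeg : F.natDegree ≤ r := by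
    rw [hF]
    refine le_trans (Polynomial.natDegree_sub_le _ _) (max_le (le_trans
      (Polynomial.natDegree_sub_le _ _) (max_le ?_ ?_)) ?_)
    · simpa using my_natDegree_le Finset.univ (fun _ => (1:ℂ)) (fun i => -(z i * y i))
    · refine le_trans (Polynomial.natDegree_C_mul_le _ _) ?_
      simpa using my_natDegree_le Finset.univ (fun _ => (1:ℂ)) (fun i => -(z i))
    · refine Polynomial.natDegree_sum_le_of_forall_le _ _ fun l _ => ?_
      refine le_trans (Polynomial.natDegree_C_mul_le _ _) ?_
      refine le_trans (my_natDegree_le _ (fun _ => (1:ℂ)) (fun i => -(z i))) ?_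
      simp [Finset.card_erase_of_mem]
  have hcoeff : F.coeff r = 0 := by
    rw [hF, Polynomial.coeff_sub, Polynomial.coeff_sub, Polynomial.coeff_C_mul]
    have h1 : (∏ i : Fin r, (C 1 + C (-(z i * y i)) * X)).coeff r = ∏ i, -(z i * y i) := by
      simpa using my_coeff_card (Finset.univ : Finset (Fin r)) (fun _ => (1:ℂ))
        (fun i => -(z i * y i))
    have h2 : (∏ i : Fin r, (C 1 + C (-(z i)) * X)).coeff r = ∏ i, -(z i) := by
      simpa using my_coeff_card (Finset.univ : Finset (Fin r)) (fun _ => (1:ℂ)) (fun i => -(z i))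
    have h3 : (∑ l, C ((∏ i, (1 - y i * z i / z l)) /
        (∏ i ∈ Finset.univ.erase l, (1 - z i / z l))) *
          ∏ i ∈ Finset.univ.erase l, (C 1 + C (-(z i)) * X)).coeff r = 0 := by
      rw [Polynomial.finset_sum_coeff]
      refine Finset.sum_eq_zero fun l _ => ?_
      rw [Polynomial.coeff_C_mul]
      have hd : (∏ i ∈ Finset.univ.erase l, (C 1 + C (-(z i)) * X)).natDegree < r := by
        refine lt_of_le_of_lt (my_natDegree_le _ (fun _ => (1:ℂ)) (fun i => -(z i))) ?_
        simp only [Finset.card_erase_of_mem (Finset.mem_univ l), Finset.card_univ,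
          Fintype.card_fin]
        exact Nat.sub_lt hrpos one_pos
      rw [coeff_eq_zero_of_natDegree_lt hd, mul_zero]
    rw [h1, h2, h3]
    have h4 : ∏ i, -(z i * y i) = (∏ i, y i) * ∏ i, -(z i) := by
      rw [← Finset.prod_mul_distrib]
      exact Finset.prod_congr rfl fun i _ => by ring
    rw [h4]; ring
  have hF0 : F = 0 := by
    by_contra h0
    have hne : F.natDegree ≠ r := by
      intro h
      apply h0
      have hl : F.leadingCoeff = 0 := by rw [Polynomial.leadingCoeff, h]; exact hcoeff
      exact Polynomial.leadingCoeff_eq_zero.mp hl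
    have hlt : F.natDegree < r := lt_of_le_of_ne hFdeg hne
    exact h0 (Polynomial.eq_zero_of_natDegree_lt_card_of_eval_eq_zero F
      (f := fun l : Fin r => (z l)⁻¹) (fun a b hab => hzinj (inv_injective hab)) hroot
      (by simpa using hlt))
  have heval := congrArg (Polynomial.eval t) hF0
  rw [hF] at heval
  simp only [Polynomial.eval_sub, Polynomial.eval_mul, Polynomial.eval_prod,
    Polynomial.eval_finset_sum, Polynomial.eval_add, Polynomial.eval_C, Polynomial.eval_X,
    Polynomial.eval_one, Polynomial.eval_zero] at heval
  have e1 : ∏ i, (1 - t * z i * y i) = ∏ i, ((1:ℂ) + -(z i * y i) * t) :=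
    Finset.prod_congr rfl fun i _ => by ring
  have e2 : ∏ i, (1 - t * z i) = ∏ i, ((1:ℂ) + -(z i) * t) :=
    Finset.prod_congr rfl fun i _ => by ring
  have e4 : (∑ l, ((∏ i, (1 - y i * z i / z l)) /
      (∏ i ∈ Finset.univ.erase l, (1 - z i / z l))) * ∏ i ∈ Finset.univ.erase l, (1 - t * z i))
      = ∑ l, ((∏ i, (1 - y i * z i / z l)) / (∏ i ∈ Finset.univ.erase l, (1 - z i / z l))) *
        ∏ i ∈ Finset.univ.erase l, ((1:ℂ) + -(z i) * t) :=
    Finset.sum_congr rfl fun l _ => by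
      rw [Finset.prod_congr rfl (fun i _ => by ring :
        ∀ i ∈ Finset.univ.erase l, (1 - t * z i) = (1:ℂ) + -(z i) * t)]
  rw [e1, e2, e4]
  linear_combination heval

lemma lemB (r : ℕ) (t : ℂ) (y z : Fin r → ℂ) (hz : ∀ i, z i ≠ 0)
    (hzinj : Function.Injective z) (ht : ∀ l, t * z l ≠ 1) :
    ∏ i, (1 - t * z i * y i) / (1 - t * z i) =
      (∏ i, y i) +
        ∑ l, (∏ i, (1 - y i * z i / z l)) /
          ((1 - t * z l) * ∏ i ∈ Finset.univ.erase l, (1 - z i / z l)) := by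
  have htl : ∀ l, (1 : ℂ) - t * z l ≠ 0 := fun l => sub_ne_zero.mpr (Ne.symm (ht l))
  have hD : (∏ i, ((1:ℂ) - t * z i)) ≠ 0 := Finset.prod_ne_zero_iff.mpr fun i _ => htl i
  have hQ : ∀ l, (∏ i ∈ Finset.univ.erase l, ((1:ℂ) - z i / z l)) ≠ 0 := by
    intro l
    refine Finset.prod_ne_zero_iff.mpr fun i hi => ?_
    have hil : i ≠ l := Finset.ne_of_mem_erase hi
    rw [sub_ne_zero]
    intro h
    apply hil; apply hzinj
    field_simp [hz l] at h
    exact h.symm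
  rw [Finset.prod_div_distrib, lemA r t y z hz hzinj, add_div, Finset.sum_div]
  congr 1
  · rw [mul_div_assoc, div_self hD, mul_one]
  · refine Finset.sum_congr rfl fun l _ => ?_
    have hE : (∏ i ∈ Finset.univ.erase l, ((1:ℂ) - t * z i)) ≠ 0 :=
      Finset.prod_ne_zero_iff.mpr fun i _ => htl i
    have hsplit : (∏ i, ((1:ℂ) - t * z i))
        = (1 - t * z l) * ∏ i ∈ Finset.univ.erase l, (1 - t * z i) :=
      (Finset.mul_prod_erase _ _ (Finset.mem_univ l)).symm
    rw [hsplit, div_eq_div_iff (mul_ne_zero (htl l) hE) (mul_ne_zero (htl l) (hQ l)),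
      div_mul_eq_mul_div, div_mul_eq_mul_div, div_eq_iff (hQ l)]
    ring

lemma lemC (r : ℕ) (y z : Fin r → ℂ) (hz : ∀ i, z i ≠ 0) (hzinj : Function.Injective z) :
    ∑ l, (∏ i, (1 - y i * z i / z l)) / (∏ i ∈ Finset.univ.erase l, (1 - z i / z l))
      = 1 - ∏ i, y i := by
  have h := lemB r 0 y z hz hzinj (fun l => by simp)
  simp only [zero_mul, sub_zero, one_mul, div_one, Finset.prod_const_one] at h
  linear_combination -h

/-- Extended partial fraction lemma (Lemma `pbz` of the paper). -/
theorem extended_partial_fraction_lemma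
    (r : ℕ) (hr : 1 ≤ r) (t u : ℂ) (y z : Fin r → ℂ)
    (hz : ∀ i, z i ≠ 0) (hzinj : Function.Injective z)
    (hu : u ≠ 1) (ht : ∀ l, t * z l ≠ 1) :
    (1 - u * ∏ i, y i) / (1 - u) * ∏ i, (1 - t * z i * y i) / (1 - t * z i) =
      (∏ i, y i) +
        ∑ l, ((1 - u * (∏ i, y i) * t * z l) * ∏ i, (1 - y i * z i / z l)) /
          ((1 - u) * (1 - t * z l) * ∏ i ∈ Finset.univ.erase l, (1 - z i / z l)) := by
  have hu' : (1 : ℂ) - u ≠ 0 := sub_ne_zero.mpr (Ne.symm hu)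
  have htl : ∀ l, (1 : ℂ) - t * z l ≠ 0 := fun l => sub_ne_zero.mpr (Ne.symm (ht l))
  have hQ : ∀ l, (∏ i ∈ Finset.univ.erase l, ((1:ℂ) - z i / z l)) ≠ 0 := by
    intro l
    refine Finset.prod_ne_zero_iff.mpr fun i hi => ?_
    have hil : i ≠ l := Finset.ne_of_mem_erase hi
    rw [sub_ne_zero]
    intro h
    apply hil; apply hzinj
    field_simp [hz l] at h
    exact h.symm
  rw [lemB r t y z hz hzinj ht]
  have hsum : ∑ l, ((1 - u * (∏ i, y i) * t * z l) * ∏ i, (1 - y i * z i / z l)) /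
        ((1 - u) * (1 - t * z l) * ∏ i ∈ Finset.univ.erase l, (1 - z i / z l)) =
      (u * (∏ i, y i) / (1 - u)) *
        ∑ l, (∏ i, (1 - y i * z i / z l)) / (∏ i ∈ Finset.univ.erase l, (1 - z i / z l)) +
      ((1 - u * ∏ i, y i) / (1 - u)) *
        ∑ l, (∏ i, (1 - y i * z i / z l)) /
          ((1 - t * z l) * ∏ i ∈ Finset.univ.erase l, (1 - z i / z l)) := by
    rw [Finset.mul_sum, Finset.mul_sum, ← Finset.sum_add_distrib]
    refine Finset.sum_congr rfl fun l _ => ?_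
    have hQl := hQ l
    have htll := htl l
    set P := ∏ i, (1 - y i * z i / z l) with hP
    set Q := ∏ i ∈ Finset.univ.erase l, ((1:ℂ) - z i / z l) with hQd
    set Y := ∏ i, y i with hY
    field_simp
    ring
  rw [hsum, lemC r y z hz hzinj]
  field_simp
  simp only [mul_comm t (z _)]
  ring
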